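/- arXiv:2501.18814 — 4 statements merged into one kernel-verified Lean document; each statement's English description precedes it below -/
import Mathlib

section
/- Let n ≥ 2 be an integer, let K, a, b ≥ 0 and R > 0. Suppose f : (0, R] → ℝ is continuously differentiable, τ : [0, R] → ℝ is continuously differentiable with |τ(t)| ≤ a t + b for all t ∈ [0, R], t² f(t) → 0 as t → 0⁺, and f'(t) ≤ −(f(t) + τ'(t))²/(n − 1) + K for all t ∈ (0, R]. Then f(R) ≤ (n − 1 + 4b)/R + 3a + (K/3) R. -/
open Set Filter

/-- One-dimensional Riccati comparison inequality (the analytic core of the Laplacian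
comparison theorem, Theorem 3.1 of the paper): if `f` on `(0,R]` satisfies
`f' ≤ -(f + τ')²/(n-1) + K` with `t² f(t) → 0` as `t → 0⁺` and the distortion `τ` has
linear growth `|τ(t)| ≤ a t + b`, then `f(R) ≤ (n-1+4b)/R + 3a + (K/3) R`. -/
theorem riccati_comparison (n : ℕ) (hn : 2 ≤ n) (K a b R : ℝ)
    (hK : 0 ≤ K) (ha : 0 ≤ a) (hb : 0 ≤ b) (hR : 0 < R)
    (f f' τ τ' : ℝ → ℝ)
    (hf : ∀ t ∈ Set.Ioc (0 : ℝ) R, HasDerivAt f (f' t) t)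
    (hf'cont : ContinuousOn f' (Set.Ioc 0 R))
    (hτ : ∀ t ∈ Set.Icc (0 : ℝ) R, HasDerivWithinAt τ (τ' t) (Set.Icc 0 R) t)
    (hτ'cont : ContinuousOn τ' (Set.Icc 0 R))
    (hτbound : ∀ t ∈ Set.Icc (0 : ℝ) R, |τ t| ≤ a * t + b)
    (hlim : Tendsto (fun t => t ^ 2 * f t) (nhdsWithin 0 (Set.Ioi 0)) (nhds 0))
    (hric : ∀ t ∈ Set.Ioc (0 : ℝ) R,
      f' t ≤ -(f t + τ' t) ^ 2 / ((n : ℝ) - 1) + K) :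
    f R ≤ ((n : ℝ) - 1 + 4 * b) / R + 3 * a + K / 3 * R := by
  have hN : (1:ℝ) ≤ (n:ℝ) - 1 := by
    have : (2:ℝ) ≤ (n:ℝ) := by exact_mod_cast hn
    linarith
  have hNpos : (0:ℝ) < (n:ℝ) - 1 := by linarith
  set N : ℝ := (n:ℝ) - 1 with hNdef
  -- continuity facts
  have hτcont : ContinuousOn τ (Set.Icc 0 R) := fun t ht => (hτ t ht).continuousWithinAt
  have hfc : ContinuousOn f (Set.Ioc 0 R) := fun t ht =>
    (hf t ht).continuousAt.continuousWithinAt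
  have hτint : MeasureTheory.IntegrableOn τ (Set.Icc 0 R) := hτcont.integrableOn_Icc
  set T : ℝ → ℝ := fun x => ∫ s in (0:ℝ)..x, τ s with hTdef
  have hTcont : ContinuousOn T (Set.Icc 0 R) := by
    have := intervalIntegral.continuousOn_primitive_interval
      (f := τ) (a := (0:ℝ)) (b := R) (μ := MeasureTheory.volume)
      (by simpa [Set.uIcc_of_le hR.le] using hτint)
    simpa [hTdef, Set.uIcc_of_le hR.le] using this
  set g : ℝ → ℝ := fun t => t^2 * f t + 2*t*τ t - 2*T t - N*t - K*t^3/3 with hgdef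
  -- derivative of g on Ioo 0 R
  have hgderiv : ∀ t ∈ Set.Ioo (0:ℝ) R, HasDerivAt g
      (2*t*f t + t^2*f' t + 2*t*τ' t - N - K*t^2) t := by
    intro t ht
    have htIoc : t ∈ Set.Ioc (0:ℝ) R := ⟨ht.1, ht.2.le⟩
    have htIcc : t ∈ Set.Icc (0:ℝ) R := ⟨ht.1.le, ht.2.le⟩
    have hmem : Set.Icc (0:ℝ) R ∈ nhds t := Icc_mem_nhds ht.1 ht.2
    have hτat : HasDerivAt τ (τ' t) t := (hτ t htIcc).hasDerivAt hmem
    have h1 : HasDerivAt (fun t => t^2 * f t) (2*t*f t + t^2*f' t) t := by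
      have := (hasDerivAt_pow 2 t).mul (hf t htIoc)
      exact this.congr_deriv (by ring)
    have h2 : HasDerivAt (fun t => 2*t*τ t) (2*τ t + 2*t*τ' t) t := by
      have := ((hasDerivAt_id t).const_mul (2:ℝ)).mul hτat
      exact this.congr_deriv (by simp only [id_eq]; ring)
    have h3 : HasDerivAt T (τ t) t := by
      have hint : IntervalIntegrable τ MeasureTheory.volume 0 t := by
        apply ContinuousOn.intervalIntegrable
        apply hτcont.mono
        rw [Set.uIcc_of_le ht.1.le]
        exact Set.Icc_subset_Icc le_rfl ht.2.le
      have hmeas := ContinuousOn.stronglyMeasurableAtFilter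
        (μ := MeasureTheory.volume) isOpen_Ioo
        (hτcont.mono Set.Ioo_subset_Icc_self) t ht
      have hca : ContinuousAt τ t := (hτcont t htIcc).continuousAt hmem
      exact intervalIntegral.integral_hasDerivAt_right hint hmeas hca
    have h4 : HasDerivAt (fun t : ℝ => N*t) N t := by
      simpa using (hasDerivAt_id t).const_mul N
    have h5 : HasDerivAt (fun t : ℝ => K*t^3/3) (K*t^2) t := by
      have := ((hasDerivAt_pow 3 t).const_mul K).div_const 3
      exact this.congr_deriv (by ring)
    have := (((h1.add h2).sub (h3.const_mul 2)).sub h4).sub h5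
    exact this.congr_deriv (by ring)
  -- derivative is nonpositive
  have hderiv_nonpos : ∀ t ∈ Set.Ioo (0:ℝ) R,
      2*t*f t + t^2*f' t + 2*t*τ' t - N - K*t^2 ≤ 0 := by
    intro t ht
    set q : ℝ := f t + τ' t with hq
    have hr : f' t ≤ -q^2/N + K := hric t ⟨ht.1, ht.2.le⟩
    have h5 : t^2 * f' t ≤ t^2 * (-q^2/N + K) :=
      mul_le_mul_of_nonneg_left hr (sq_nonneg t)
    have h6 : t^2 * (-q^2/N + K) = -((t*q)^2)/N + K*t^2 := by ring
    have h7 : (0:ℝ) ≤ (t*q - N)^2/N := div_nonneg (sq_nonneg _) hNpos.le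
    have h8 : (t*q - N)^2/N = (t*q)^2/N - 2*(t*q) + N := by
      field_simp
      ring
    have h9 : 2*t*f t + 2*t*τ' t = 2*(t*q) := by rw [hq]; ring
    have h10 : -((t*q)^2)/N = -((t*q)^2/N) := by ring
    linarith [h5, h7]
  -- antitone on [ε, R]
  have hmono : ∀ ε ∈ Set.Ioc (0:ℝ) R, g R ≤ g ε := by
    intro ε hε
    have hsub1 : Set.Icc ε R ⊆ Set.Ioc (0:ℝ) R := fun x hx => ⟨lt_of_lt_of_le hε.1 hx.1, hx.2⟩
    have hsub2 : Set.Icc ε R ⊆ Set.Icc (0:ℝ) R := fun x hx => ⟨le_trans hε.1.le hx.1, hx.2⟩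
    have hgcont : ContinuousOn g (Set.Icc ε R) := by
      apply ContinuousOn.sub
      apply ContinuousOn.sub
      apply ContinuousOn.sub
      apply ContinuousOn.add
      · exact (continuousOn_pow 2).mul (hfc.mono hsub1)
      · exact ((continuous_const.mul continuous_id).continuousOn).mul (hτcont.mono hsub2)
      · exact continuousOn_const.mul (hTcont.mono hsub2)
      · exact continuousOn_const.mul continuousOn_id
      · exact (continuousOn_const.mul (continuousOn_pow 3)).div_const 3
    have hioo : interior (Set.Icc ε R) = Set.Ioo ε R := interior_Icc
    have hsub3 : Set.Ioo ε R ⊆ Set.Ioo (0:ℝ) R := fun x hx => ⟨lt_trans hε.1 hx.1, hx.2⟩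
    have hanti : AntitoneOn g (Set.Icc ε R) := by
      apply antitoneOn_of_deriv_nonpos (convex_Icc ε R) hgcont
      · intro x hx
        rw [hioo] at hx
        exact (hgderiv x (hsub3 hx)).differentiableAt.differentiableWithinAt
      · intro x hx
        rw [hioo] at hx
        rw [(hgderiv x (hsub3 hx)).deriv]
        exact hderiv_nonpos x (hsub3 hx)
    exact hanti (Set.left_mem_Icc.2 hε.2) (Set.right_mem_Icc.2 hε.2) hε.2
  -- g tends to 0 as ε → 0⁺
  have hIccmem : Set.Icc (0:ℝ) R ∈ nhdsWithin (0:ℝ) (Set.Ioi 0) :=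
    Filter.mem_of_superset (Ioc_mem_nhdsGT_of_mem ⟨le_rfl, hR⟩) Set.Ioc_subset_Icc_self
  have hle : nhdsWithin (0:ℝ) (Set.Ioi 0) ≤ nhdsWithin 0 (Set.Icc 0 R) :=
    nhdsWithin_le_of_mem hIccmem
  have hid : Tendsto (fun ε : ℝ => ε) (nhdsWithin 0 (Set.Ioi 0)) (nhds 0) :=
    tendsto_id.mono_left nhdsWithin_le_nhds
  have hτ0 : Tendsto τ (nhdsWithin 0 (Set.Ioi 0)) (nhds (τ 0)) :=
    (hτcont 0 ⟨le_rfl, hR.le⟩).mono_left hle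
  have hT0 : Tendsto T (nhdsWithin 0 (Set.Ioi 0)) (nhds 0) := by
    have : T 0 = 0 := intervalIntegral.integral_same
    have h := (hTcont 0 ⟨le_rfl, hR.le⟩).mono_left hle
    rwa [this] at h
  have hglim : Tendsto g (nhdsWithin 0 (Set.Ioi 0)) (nhds 0) := by
    have h2' : Tendsto (fun ε : ℝ => 2*ε*τ ε) (nhdsWithin 0 (Set.Ioi 0)) (nhds 0) := by
      have := ((hid.const_mul 2).mul hτ0)
      simpa using this
    have h3' : Tendsto (fun ε : ℝ => 2*T ε) (nhdsWithin 0 (Set.Ioi 0)) (nhds 0) := by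
      simpa using hT0.const_mul 2
    have h4' : Tendsto (fun ε : ℝ => N*ε) (nhdsWithin 0 (Set.Ioi 0)) (nhds 0) := by
      simpa using hid.const_mul N
    have h5' : Tendsto (fun ε : ℝ => K*ε^3/3) (nhdsWithin 0 (Set.Ioi 0)) (nhds 0) := by
      have := (((hid.pow 3).const_mul K).div_const 3)
      simpa using this
    have := (((hlim.add h2').sub h3').sub h4').sub h5'
    simpa using this
  have hgR : g R ≤ 0 := by
    apply ge_of_tendsto hglim
    filter_upwards [Ioc_mem_nhdsGT_of_mem ⟨le_rfl, hR⟩] with ε hε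
    exact hmono ε hε
  -- bound T R and τ R
  have hint1 : IntervalIntegrable τ MeasureTheory.volume 0 R :=
    ContinuousOn.intervalIntegrable (by rwa [Set.uIcc_of_le hR.le])
  have hc1 : IntervalIntegrable (fun s : ℝ => a*s) MeasureTheory.volume 0 R :=
    (continuous_const.mul continuous_id).intervalIntegrable 0 R
  have hc2 : IntervalIntegrable (fun _ : ℝ => b) MeasureTheory.volume 0 R :=
    continuous_const.intervalIntegrable 0 R
  have hint2 : IntervalIntegrable (fun s => a*s + b) MeasureTheory.volume 0 R :=
    hc1.add hc2
  have hTR : T R ≤ a*R^2/2 + b*R := by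
    have hmono' : T R ≤ ∫ s in (0:ℝ)..R, (a*s + b) := by
      apply intervalIntegral.integral_mono_on hR.le hint1 hint2
      intro s hs
      exact le_trans (le_abs_self _) (hτbound s hs)
    have hcalc : ∫ s in (0:ℝ)..R, (a*s + b) = a*R^2/2 + b*R := by
      rw [intervalIntegral.integral_add hc1 hc2, intervalIntegral.integral_const_mul,
        integral_id, intervalIntegral.integral_const]
      simp
      ring
    linarith
  have hτR : -τ R ≤ a*R + b := by
    have := hτbound R ⟨hR.le, le_rfl⟩
    have := neg_le_of_abs_le this
    linarith
  -- conclude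
  have hgRval : R^2 * f R + 2*R*τ R - 2*T R - N*R - K*R^3/3 ≤ 0 := hgR
  have hmain : R^2 * f R ≤ N*R + 3*a*R^2 + 4*b*R + K*R^3/3 := by nlinarith
  have hR2 : (0:ℝ) < R^2 := by positivity
  have : f R ≤ (N*R + 3*a*R^2 + 4*b*R + K*R^3/3)/R^2 := by
    rw [le_div_iff₀ hR2]
    nlinarith
  have heq : (N*R + 3*a*R^2 + 4*b*R + K*R^3/3)/R^2 = (N + 4*b)/R + 3*a + K/3*R := by
    field_simp
    ring
  rw [heq] at this
  exact this
end

section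
/- Let (Θ, μ) be a measure space, R > 0, and let c ≥ 1 and a, K ≥ 0 be constants. For each t ∈ (0, R) let D(t) ⊆ Θ be a measurable set such that D(t) ⊆ D(s) whenever 0 < s ≤ t < R. Let σ : (0, R) × Θ → [0, ∞) be measurable, integrable on (0, r) × Θ for each r < R, and suppose that for all 0 < s < t < R and all θ ∈ D(t), σ(t, θ) s^{c} ≤ t^{c} σ(s, θ) e^{3a(t − s) + (K/6)(t² − s²)}. Define V(r) := ∫₀^{r} (∫_{D(t)} σ(t, θ) dμ(θ)) dt. Then for all 0 < r₁ < r₂ < R with V(r₁) > 0, V(r₂)/V(r₁) ≤ (r₂/r₁)^{c+1} · e^{3a r₂ + (K/6) r₂²}. -/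
open MeasureTheory Set ENNReal

/-- Change of variables `t = l * s` for lower Lebesgue integrals of arbitrary functions. -/
lemma cov_mul_left (f : ℝ → ℝ≥0∞) (l r : ℝ) (hl : 0 < l) :
    ∫⁻ t in Set.Ioo (0:ℝ) (l * r), f t
      = ENNReal.ofReal l * ∫⁻ s in Set.Ioo (0:ℝ) r, f (l * s) := by
  have hl' : l ≠ 0 := hl.ne'
  have hpre : (l * ·) ⁻¹' Set.Ioo (0:ℝ) (l * r) = Set.Ioo 0 r := by
    ext x
    simp only [Set.mem_preimage, Set.mem_Ioo]
    constructor
    · rintro ⟨hx1, hx2⟩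
      exact ⟨by nlinarith, by nlinarith⟩
    · rintro ⟨hx1, hx2⟩
      exact ⟨mul_pos hl hx1, (mul_lt_mul_iff_right₀ hl).2 hx2⟩
  calc ∫⁻ t in Set.Ioo (0:ℝ) (l * r), f t
      = ∫⁻ t, f t ∂((ENNReal.ofReal |l| • Measure.map (l * ·) volume).restrict
          (Set.Ioo (0:ℝ) (l * r))) := by
        rw [Real.smul_map_volume_mul_left hl']
    _ = ENNReal.ofReal |l| * ∫⁻ t, f t
          ∂((Measure.map (l * ·) volume).restrict (Set.Ioo (0:ℝ) (l * r))) := by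
        rw [Measure.restrict_smul, lintegral_smul_measure, smul_eq_mul]
    _ = ENNReal.ofReal |l| * ∫⁻ t, f t
          ∂(Measure.map (l * ·) (volume.restrict ((l * ·) ⁻¹' Set.Ioo (0:ℝ) (l * r)))) := by
        rw [Measure.restrict_map (measurable_const_mul l) measurableSet_Ioo]
    _ = ENNReal.ofReal l * ∫⁻ s in Set.Ioo (0:ℝ) r, f (l * s) := by
        rw [hpre, abs_of_pos hl]
        congr 1
        exact ((MeasurableEquiv.mulLeft₀ l hl').measurableEmbedding.lintegral_map f)

/-- Integration lemma at the core of the volume comparison theorem (Theorem 3.2 of the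
paper): if the polar density `σ(t,θ)` satisfies
`σ(t,θ) s^c ≤ t^c σ(s,θ) e^{3a(t-s) + (K/6)(t²-s²)}` for `0 < s < t < R` and `θ ∈ D(t)`,
with the direction sets `D(t)` shrinking in `t`, then the ball volumes
`V(r) = ∫₀^r ∫_{D(t)} σ dμ dt` satisfy
`V(r₂)/V(r₁) ≤ (r₂/r₁)^(c+1) e^{3a r₂ + (K/6) r₂²}`. -/
theorem volume_comparison_core {Θ : Type*} [MeasurableSpace Θ] (μ : Measure Θ)
    (R c a K : ℝ) (hR : 0 < R) (hc : 1 ≤ c) (ha : 0 ≤ a) (hK : 0 ≤ K)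
    (D : ℝ → Set Θ) (hDmeas : ∀ t, MeasurableSet (D t))
    (hDmono : ∀ s t : ℝ, 0 < s → s ≤ t → t < R → D t ⊆ D s)
    (σ : ℝ → Θ → ℝ≥0∞) (hσ : Measurable (Function.uncurry σ))
    (hint : ∀ r ∈ Set.Ioo (0 : ℝ) R, (∫⁻ t in Set.Ioo (0 : ℝ) r, ∫⁻ θ, σ t θ ∂μ) < ⊤)
    (hpt : ∀ s t : ℝ, 0 < s → s < t → t < R → ∀ θ ∈ D t,
      σ t θ * ENNReal.ofReal (s ^ c) ≤
        ENNReal.ofReal (t ^ c) * σ s θ *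
          ENNReal.ofReal (Real.exp (3 * a * (t - s) + K / 6 * (t ^ 2 - s ^ 2))))
    (V : ℝ → ℝ≥0∞)
    (hV : ∀ r : ℝ, V r = ∫⁻ t in Set.Ioo (0 : ℝ) r, ∫⁻ θ in D t, σ t θ ∂μ)
    (r₁ r₂ : ℝ) (h1 : 0 < r₁) (h12 : r₁ < r₂) (h2 : r₂ < R) (hV1 : 0 < V r₁) :
    V r₂ / V r₁ ≤
      ENNReal.ofReal ((r₂ / r₁) ^ (c + 1) * Real.exp (3 * a * r₂ + K / 6 * r₂ ^ 2)) := by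
  set l := r₂ / r₁ with hl_def
  have hl : 1 < l := (one_lt_div h1).2 h12
  have hl0 : 0 < l := lt_trans one_pos hl
  set E := Real.exp (3 * a * r₂ + K / 6 * r₂ ^ 2) with hE_def
  set g : ℝ → ℝ≥0∞ := fun t => ∫⁻ θ in D t, σ t θ ∂μ with hg_def
  -- key pointwise bound: for s ∈ Ioo 0 r₁, g (l s) ≤ ofReal (l^c * E) * g s
  have key : ∀ s ∈ Set.Ioo (0:ℝ) r₁, g (l * s) ≤ ENNReal.ofReal (l ^ c * E) * g s := by
    intro s hs
    obtain ⟨hs0, hs1⟩ := hs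
    set t := l * s with ht_def
    have hst : s < t := by
      calc s = 1 * s := (one_mul s).symm
        _ < l * s := by exact mul_lt_mul_of_pos_right hl hs0
    have ht0 : 0 < t := lt_trans hs0 hst
    have htr : t < r₂ := by
      have : l * s < l * r₁ := (mul_lt_mul_iff_right₀ hl0).2 hs1
      simpa [ht_def, hl_def, div_mul_cancel₀ _ h1.ne'] using this
    have htR : t < R := htr.trans h2
    -- pointwise on D t
    have hptθ : ∀ θ ∈ D t, σ t θ ≤ ENNReal.ofReal (l ^ c * E) * σ s θ := by
      intro θ hθ
      have hsc : (0:ℝ) < s ^ c := Real.rpow_pos_of_pos hs0 c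
      rw [← ENNReal.mul_le_mul_iff_left (c := ENNReal.ofReal (s ^ c))
        (ENNReal.ofReal_pos.2 hsc).ne' ENNReal.ofReal_ne_top]
      refine (hpt s t hs0 hst htR θ hθ).trans ?_
      have hexp : Real.exp (3 * a * (t - s) + K / 6 * (t ^ 2 - s ^ 2)) ≤ E := by
        apply Real.exp_le_exp.2
        have h1' : 3 * a * (t - s) ≤ 3 * a * r₂ := by
          apply mul_le_mul_of_nonneg_left _ (by positivity)
          nlinarith
        have h2' : K / 6 * (t ^ 2 - s ^ 2) ≤ K / 6 * r₂ ^ 2 := by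
          apply mul_le_mul_of_nonneg_left _ (by positivity)
          nlinarith
        linarith
      have htc : t ^ c = l ^ c * s ^ c := by
        rw [ht_def, Real.mul_rpow hl0.le hs0.le]
      calc ENNReal.ofReal (t ^ c) * σ s θ *
            ENNReal.ofReal (Real.exp (3 * a * (t - s) + K / 6 * (t ^ 2 - s ^ 2)))
          ≤ ENNReal.ofReal (t ^ c) * σ s θ * ENNReal.ofReal E :=
            mul_le_mul_right (ENNReal.ofReal_le_ofReal hexp) _
        _ = ENNReal.ofReal (l ^ c * E) * σ s θ * ENNReal.ofReal (s ^ c) := by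
            have hlc : (0:ℝ) ≤ l ^ c := (Real.rpow_pos_of_pos hl0 c).le
            rw [htc, ENNReal.ofReal_mul hlc, ENNReal.ofReal_mul hlc]
            ring
    calc g (l * s) = ∫⁻ θ in D t, σ t θ ∂μ := rfl
      _ ≤ ∫⁻ θ in D t, ENNReal.ofReal (l ^ c * E) * σ s θ ∂μ :=
          setLIntegral_mono' (hDmeas t) hptθ
      _ ≤ ∫⁻ θ in D s, ENNReal.ofReal (l ^ c * E) * σ s θ ∂μ :=
          lintegral_mono' (Measure.restrict_mono (hDmono s t hs0 hst.le htR) le_rfl) le_rfl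
      _ = ENNReal.ofReal (l ^ c * E) * g s :=
          lintegral_const_mul' _ _ ENNReal.ofReal_ne_top
  -- main estimate
  have hr2 : r₂ = l * r₁ := by rw [hl_def, div_mul_cancel₀ _ h1.ne']
  have hmain : V r₂ ≤ ENNReal.ofReal (l ^ (c + 1) * E) * V r₁ := by
    calc V r₂ = ∫⁻ t in Set.Ioo (0:ℝ) (l * r₁), g t := by rw [hV, hr2]
      _ = ENNReal.ofReal l * ∫⁻ s in Set.Ioo (0:ℝ) r₁, g (l * s) := cov_mul_left g l r₁ hl0
      _ ≤ ENNReal.ofReal l * ∫⁻ s in Set.Ioo (0:ℝ) r₁, ENNReal.ofReal (l ^ c * E) * g s :=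
          mul_le_mul_right (setLIntegral_mono' measurableSet_Ioo key) _
      _ = ENNReal.ofReal l * (ENNReal.ofReal (l ^ c * E) * V r₁) := by
          rw [lintegral_const_mul' _ _ ENNReal.ofReal_ne_top, hV]
      _ = ENNReal.ofReal (l ^ (c + 1) * E) * V r₁ := by
          rw [← mul_assoc, ← ENNReal.ofReal_mul hl0.le]
          congr 2
          rw [Real.rpow_add_one hl0.ne']
          ring
  have hV1top : V r₁ ≠ ⊤ := by
    refine ne_top_of_le_ne_top (hint r₁ ⟨h1, h12.trans h2⟩).ne ?_
    rw [hV]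
    exact lintegral_mono fun t => setLIntegral_le_lintegral _ _
  rw [ENNReal.div_le_iff hV1.ne' hV1top]
  exact hmain
end

section
/- Let (X, m) be a measure space, δ ∈ (0, 1), ν > 2, set t := 1 + 2/ν, and let D > 0. Let {B_σ}_{σ ∈ [δ,1]} be measurable subsets of X with B_{σ'} ⊆ B_σ whenever σ' ≤ σ. Let u : X → [0, ∞) be measurable and suppose that for all δ ≤ σ' < σ ≤ 1 and all s ≥ 1, ∫_{B_{σ'}} u^{2st} dm ≤ (D s² / (σ − σ')²) · (∫_{B_σ} u^{2s} dm)^{t}. Then there is a constant C(ν) depending only on ν such that ess sup_{B_δ} u² ≤ C(ν) · D^{ν/2} · (1 − δ)^{−ν} · ∫_{B_1} u² dm. -/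
open MeasureTheory Set ENNReal Filter

/-- Abstract Moser iteration (the iteration step in the proof of the `L^p` mean value
inequality, Theorem 4.3 of the paper): if a nonnegative measurable function `u` on nested
sets `B_σ`, `δ ≤ σ ≤ 1`, satisfies the reverse-Hölder family of inequalities
`∫_{B_{σ'}} u^{2st} ≤ (D s²/(σ-σ')²) (∫_{B_σ} u^{2s})^t` with `t = 1 + 2/ν`, then
`ess sup_{B_δ} u² ≤ C(ν) D^{ν/2} (1-δ)^{-ν} ∫_{B_1} u²`, with `C(ν)` depending only on `ν`. -/
theorem moser_iteration (ν : ℝ) (hν : 2 < ν) :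
    ∃ C : ℝ, 0 < C ∧
      ∀ (X : Type) (_ : MeasurableSpace X) (m : Measure X) (δ D : ℝ) (B : ℝ → Set X)
        (u : X → ℝ≥0∞),
        0 < δ → δ < 1 → 0 < D →
        (∀ σ ∈ Set.Icc δ (1 : ℝ), MeasurableSet (B σ)) →
        (∀ σ' σ : ℝ, δ ≤ σ' → σ' ≤ σ → σ ≤ 1 → B σ' ⊆ B σ) →
        Measurable u →
        (∀ σ' σ : ℝ, δ ≤ σ' → σ' < σ → σ ≤ 1 → ∀ s : ℝ, 1 ≤ s →
          (∫⁻ x in B σ', u x ^ (2 * s * (1 + 2 / ν)) ∂m) ≤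
            ENNReal.ofReal (D * s ^ 2 / (σ - σ') ^ 2) *
              (∫⁻ x in B σ, u x ^ (2 * s) ∂m) ^ (1 + 2 / ν)) →
        essSup (fun x => u x ^ (2 : ℝ)) (m.restrict (B δ)) ≤
          ENNReal.ofReal (C * D ^ (ν / 2) * (1 - δ) ^ (-ν)) *
            ∫⁻ x in B 1, u x ^ (2 : ℝ) ∂m := by
  have hν0 : (0:ℝ) < ν := lt_trans two_pos hν
  set t : ℝ := 1 + 2 / ν with ht_def
  have h2ν : 0 < 2 / ν := by positivity
  have ht1 : 1 < t := by rw [ht_def]; linarith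
  have ht0 : 0 < t := lt_trans one_pos ht1
  set x : ℝ := t⁻¹ with hx_def
  have hx0 : 0 < x := by rw [hx_def]; positivity
  have hx1 : x < 1 := by rw [hx_def]; exact inv_lt_one_of_one_lt₀ ht1
  set r : ℝ := 4 * t ^ 2 with hr_def
  have hr1 : 1 ≤ r := by rw [hr_def]; nlinarith
  have hr0 : 0 < r := lt_of_lt_of_le one_pos hr1
  set S : ℝ := x * (x / (1 - x) ^ 2) with hS_def
  have hS0 : 0 ≤ S := by
    rw [hS_def]
    exact mul_nonneg hx0.le (div_nonneg hx0.le (sq_nonneg _))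
  refine ⟨2 ^ ν * r ^ S,
    mul_pos (Real.rpow_pos_of_pos two_pos ν) (Real.rpow_pos_of_pos hr0 S), ?_⟩
  intro X _ m δ D B u hδ0 hδ1 hD hBmeas hBnest hu hineq
  have h1δ : 0 < 1 - δ := by linarith
  -- the radii
  set σ : ℕ → ℝ := fun k => δ + (1 - δ) * (2⁻¹ : ℝ) ^ k with hσ_def
  have hσ0 : σ 0 = 1 := by simp [hσ_def]
  have hσ_le_one : ∀ k, σ k ≤ 1 := by
    intro k
    have h1 : (2⁻¹ : ℝ) ^ k ≤ 1 := pow_le_one₀ (by norm_num) (by norm_num)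
    have : (1 - δ) * (2⁻¹ : ℝ) ^ k ≤ (1 - δ) * 1 := by nlinarith
    simp only [hσ_def]; linarith
  have hσ_ge : ∀ k, δ ≤ σ k := by
    intro k
    have h1 : (0:ℝ) ≤ (2⁻¹:ℝ) ^ k := by positivity
    have : (0:ℝ) ≤ (1 - δ) * (2⁻¹:ℝ)^k := by nlinarith
    simp only [hσ_def]; linarith
  have hσ_lt : ∀ k, σ (k+1) < σ k := by
    intro k
    have h1 : (0:ℝ) < (2⁻¹:ℝ) ^ k := by positivity
    simp only [hσ_def, pow_succ]
    nlinarith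
  have hσ_diff : ∀ k, σ k - σ (k+1) = (1 - δ) * (2⁻¹:ℝ) ^ (k+1) := by
    intro k
    simp only [hσ_def, pow_succ]
    ring
  -- constants
  set K : ℝ := 4 * D / (1 - δ) ^ 2 with hK_def
  have hK0 : 0 < K := by
    rw [hK_def]; exact div_pos (by linarith) (pow_pos h1δ 2)
  -- the iterated integrals
  set I : ℕ → ℝ≥0∞ := fun k => ∫⁻ y in B (σ k), u y ^ (2 * t ^ k) ∂m with hI_def
  have hI00 : I 0 = ∫⁻ y in B 1, u y ^ (2:ℝ) ∂m := by
    simp [hI_def, hσ0]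
  have hconst_pos : 0 < 2 ^ ν * r ^ S * D ^ (ν / 2) * (1 - δ) ^ (-ν) :=
    mul_pos (mul_pos (mul_pos (Real.rpow_pos_of_pos two_pos ν)
      (Real.rpow_pos_of_pos hr0 S)) (Real.rpow_pos_of_pos hD _))
      (Real.rpow_pos_of_pos h1δ _)
  by_cases hItop : I 0 = ⊤
  · rw [← hI00, hItop, ENNReal.mul_top (ENNReal.ofReal_pos.mpr hconst_pos).ne']
    exact le_top
  -- the recursion
  have hcoef : ∀ k : ℕ, D * (t ^ k) ^ 2 / ((1 - δ) * (2⁻¹:ℝ) ^ (k+1)) ^ 2 = K * r ^ k := by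
    have hne1 : (1 - δ) ≠ 0 := ne_of_gt h1δ
    intro k
    induction k with
    | zero =>
      rw [hK_def]
      field_simp
      ring
    | succ n ih =>
      have hne2 : ((2:ℝ)⁻¹) ^ (n+1) ≠ 0 := by positivity
      have htn : (t:ℝ) ^ n ≠ 0 := ne_of_gt (pow_pos ht0 n)
      have expand : D * (t ^ n * t) ^ 2 / ((1 - δ) * ((2⁻¹:ℝ) ^ (n+1) * 2⁻¹)) ^ 2 =
          D * (t ^ n) ^ 2 / ((1 - δ) * (2⁻¹:ℝ) ^ (n+1)) ^ 2 * (4 * t ^ 2) := by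
        field_simp
        ring
      rw [pow_succ t n, pow_succ (2⁻¹:ℝ) (n+1), expand, ih, hr_def]
      ring
  have hrec : ∀ k : ℕ, I (k+1) ≤ ENNReal.ofReal (K * r ^ k) * I k ^ t := by
    intro k
    have hs1 : (1:ℝ) ≤ t ^ k := one_le_pow₀ ht1.le
    have h := hineq (σ (k+1)) (σ k) (hσ_ge (k+1)) (hσ_lt k) (hσ_le_one k) (t ^ k) hs1
    have hexp : 2 * t ^ k * t = 2 * t ^ (k+1) := by rw [pow_succ]; ring
    rw [hexp] at h
    rw [hσ_diff k, hcoef k] at h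
    simp only [hI_def]
    exact h
  -- partial sums of exponents
  set p : ℕ → ℝ := fun k => ∑ j ∈ Finset.range k, x ^ (j+1) with hp_def
  set q : ℕ → ℝ := fun k => ∑ j ∈ Finset.range k, (j:ℝ) * x ^ (j+1) with hq_def
  -- the main iteration claim
  have claim : ∀ k : ℕ, I k ^ (((t:ℝ) ^ k)⁻¹) ≤
      ENNReal.ofReal (K ^ (p k) * r ^ (q k)) * I 0 := by
    intro k
    induction k with
    | zero =>
      simp [hp_def, hq_def]
    | succ n ih =>
      have hepos : (0:ℝ) < ((t:ℝ) ^ (n+1))⁻¹ := by positivity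
      have hKr : (0:ℝ) < K * r ^ n := mul_pos hK0 (pow_pos hr0 n)
      have he : ((t:ℝ) ^ (n+1))⁻¹ = x ^ (n+1) := by rw [hx_def, inv_pow]
      calc I (n+1) ^ (((t:ℝ) ^ (n+1))⁻¹)
          ≤ (ENNReal.ofReal (K * r ^ n) * I n ^ t) ^ (((t:ℝ) ^ (n+1))⁻¹) :=
            ENNReal.rpow_le_rpow (hrec n) hepos.le
        _ = ENNReal.ofReal ((K * r ^ n) ^ (((t:ℝ) ^ (n+1))⁻¹)) *
              I n ^ (((t:ℝ) ^ n)⁻¹) := by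
            rw [ENNReal.mul_rpow_of_nonneg _ _ hepos.le,
              ENNReal.ofReal_rpow_of_pos hKr, ← ENNReal.rpow_mul]
            congr 2
            rw [pow_succ]
            field_simp
        _ ≤ ENNReal.ofReal ((K * r ^ n) ^ (((t:ℝ) ^ (n+1))⁻¹)) *
              (ENNReal.ofReal (K ^ (p n) * r ^ (q n)) * I 0) := mul_le_mul_right ih _
        _ = ENNReal.ofReal (K ^ (p (n+1)) * r ^ (q (n+1))) * I 0 := by
            rw [← mul_assoc, ← ENNReal.ofReal_mul (Real.rpow_nonneg hKr.le _)]
            congr 2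
            simp only [hp_def, hq_def, Finset.sum_range_succ]
            rw [he, Real.mul_rpow hK0.le (pow_pos hr0 n).le,
              ← Real.rpow_natCast r n, ← Real.rpow_mul hr0.le,
              Real.rpow_add hK0, Real.rpow_add hr0]
            ring
  -- bound on q
  have hxnorm : ‖x‖ < 1 := by rw [Real.norm_eq_abs, abs_of_pos hx0]; exact hx1
  have hgeom : HasSum (fun n : ℕ => (n:ℝ) * x ^ n) (x / (1-x)^2) :=
    hasSum_coe_mul_geometric_of_norm_lt_one hxnorm
  have hq_le : ∀ k, q k ≤ S := by
    intro k
    have hqk : q k = x * ∑ j ∈ Finset.range k, (j:ℝ) * x ^ j := by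
      rw [hq_def, Finset.mul_sum]
      refine Finset.sum_congr rfl fun j _ => ?_
      rw [pow_succ]; ring
    rw [hqk, hS_def]
    refine mul_le_mul_of_nonneg_left ?_ hx0.le
    exact sum_le_hasSum _ (fun j _ => by positivity) hgeom
  -- limit of p
  have hp_tendsto : Tendsto p atTop (nhds (ν/2)) := by
    have h1 : HasSum (fun j : ℕ => x ^ (j+1)) (x * (1-x)⁻¹) := by
      have := (hasSum_geometric_of_lt_one hx0.le hx1).mul_left x
      refine this.congr_fun fun j => ?_
      rw [pow_succ]; ring
    have hval : x * (1-x)⁻¹ = ν/2 := by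
      rw [hx_def, ht_def]
      have hne : (1:ℝ) + 2/ν ≠ 0 := by positivity
      have hνne : ν ≠ 0 := ne_of_gt hν0
      field_simp
      ring
    rw [← hval]
    exact h1.tendsto_sum_nat
  -- limit of K ^ p k
  have hKlim : Tendsto (fun k => K ^ (p k)) atTop (nhds (K ^ (ν/2))) := by
    simp only [Real.rpow_def_of_pos hK0]
    exact (Real.continuous_exp.tendsto _).comp (hp_tendsto.const_mul _)
  -- measurability of u ^ 2
  have hu2 : Measurable (fun y => u y ^ (2:ℝ)) :=
    ENNReal.continuous_rpow_const.measurable.comp hu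
  have hBδ : MeasurableSet (B δ) := hBmeas δ ⟨le_refl δ, hδ1.le⟩
  -- reduce to the K-form of the constant
  have hKpow : K ^ (ν/2) = 2 ^ ν * D ^ (ν/2) * (1-δ) ^ (-ν) := by
    have h4 : (4:ℝ) ^ (ν/2) = 2 ^ ν := by
      rw [show (4:ℝ) = 2 ^ (2:ℕ) by norm_num, ← Real.rpow_natCast 2 2,
        ← Real.rpow_mul (by norm_num : (0:ℝ) ≤ 2)]
      congr 1
      ring
    have h2 : ((1-δ:ℝ) ^ (2:ℕ)) ^ (ν/2) = (1-δ) ^ ν := by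
      rw [← Real.rpow_natCast (1-δ) 2, ← Real.rpow_mul h1δ.le]
      congr 1
      ring
    rw [hK_def, Real.div_rpow (by positivity) (pow_nonneg h1δ.le 2),
      Real.mul_rpow (by norm_num : (0:ℝ) ≤ 4) hD.le, h4, h2,
      Real.rpow_neg h1δ.le, div_eq_mul_inv]
  have hgoal : (2:ℝ) ^ ν * r ^ S * D ^ (ν/2) * (1-δ) ^ (-ν) = K ^ (ν/2) * r ^ S := by
    rw [hKpow]; ring
  rw [hgoal, ← hI00]
  -- dense approximation of the essential supremum
  refine le_of_forall_lt_imp_le_of_dense ?_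
  intro a ha
  rcases eq_or_ne a 0 with rfl | ha0
  · exact zero_le
  have haT : a ≠ ⊤ := ne_top_of_lt ha
  -- the superlevel set
  set E : Set X := {y | a < u y ^ (2:ℝ)} with hE_def
  have hEmeas : MeasurableSet E := measurableSet_lt measurable_const hu2
  set Sa : Set X := B δ ∩ E with hSa_def
  have hSameas : MeasurableSet Sa := hBδ.inter hEmeas
  have hmSa : m Sa ≠ 0 := by
    intro h0
    have hae : ∀ᵐ y ∂(m.restrict (B δ)), u y ^ (2:ℝ) ≤ a := by
      rw [ae_iff]
      have : {y | ¬ u y ^ (2:ℝ) ≤ a} = E := by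
        ext y; simp [hE_def, not_le]
      rw [this, Measure.restrict_apply hEmeas, Set.inter_comm, ← hSa_def, h0]
    exact absurd (lt_of_lt_of_le ha (essSup_le_of_ae_le a hae)) (lt_irrefl _)
  -- lower bound for I k
  have hlow : ∀ k : ℕ, a ^ ((t:ℝ) ^ k) * m Sa ≤ I k := by
    intro k
    have hsub : Sa ⊆ B (σ k) :=
      subset_trans Set.inter_subset_left (hBnest δ (σ k) le_rfl (hσ_ge k) (hσ_le_one k))
    have htk : (0:ℝ) ≤ (t:ℝ) ^ k := (pow_pos ht0 k).le
    have h2 : ∀ y ∈ Sa, (a : ℝ≥0∞) ^ ((t:ℝ) ^ k) ≤ u y ^ (2 * t ^ k) := by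
      intro y hy
      have hay : a ≤ u y ^ (2:ℝ) := le_of_lt hy.2
      calc a ^ ((t:ℝ) ^ k) ≤ (u y ^ (2:ℝ)) ^ ((t:ℝ) ^ k) :=
            ENNReal.rpow_le_rpow hay htk
        _ = u y ^ (2 * t ^ k) := by rw [← ENNReal.rpow_mul]
    calc a ^ ((t:ℝ) ^ k) * m Sa = ∫⁻ _ in Sa, a ^ ((t:ℝ) ^ k) ∂m :=
          (setLIntegral_const _ _).symm
      _ ≤ ∫⁻ y in Sa, u y ^ (2 * t ^ k) ∂m := setLIntegral_mono' hSameas h2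
      _ ≤ I k := lintegral_mono_set hsub
  -- Sa has finite measure
  have hmS_top : m Sa ≠ ⊤ := by
    intro htop
    have h := hlow 0
    rw [pow_zero, ENNReal.rpow_one, htop, ENNReal.mul_top ha0] at h
    exact hItop (top_le_iff.mp h)
  set β : ℝ := (m Sa).toReal with hβ_def
  have hβ0 : 0 < β := ENNReal.toReal_pos hmSa hmS_top
  have hmS_eq : m Sa = ENNReal.ofReal β := (ENNReal.ofReal_toReal hmS_top).symm
  -- the combined chain of inequality, for each k
  have hchain : ∀ k : ℕ, a * ENNReal.ofReal (β ^ (x ^ k)) ≤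
      ENNReal.ofReal (K ^ (p k) * r ^ S) * I 0 := by
    intro k
    have htk0 : (0:ℝ) < (t:ℝ) ^ k := pow_pos ht0 k
    have he : ((t:ℝ) ^ k)⁻¹ = x ^ k := by rw [hx_def, inv_pow]
    have h1 : (a ^ ((t:ℝ) ^ k) * m Sa) ^ (((t:ℝ) ^ k)⁻¹) ≤ I k ^ (((t:ℝ) ^ k)⁻¹) :=
      ENNReal.rpow_le_rpow (hlow k) (inv_nonneg.mpr htk0.le)
    have h2 : (a ^ ((t:ℝ) ^ k) * m Sa) ^ (((t:ℝ) ^ k)⁻¹) =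
        a * ENNReal.ofReal (β ^ (x ^ k)) := by
      rw [ENNReal.mul_rpow_of_nonneg _ _ (inv_nonneg.mpr htk0.le),
        ← ENNReal.rpow_mul, mul_inv_cancel₀ (ne_of_gt htk0), ENNReal.rpow_one,
        hmS_eq, ENNReal.ofReal_rpow_of_pos hβ0, he]
    have h3 : ENNReal.ofReal (K ^ (p k) * r ^ (q k)) * I 0 ≤
        ENNReal.ofReal (K ^ (p k) * r ^ S) * I 0 := by
      refine mul_le_mul_left (ENNReal.ofReal_le_ofReal ?_) _
      exact mul_le_mul_of_nonneg_left
        (Real.rpow_le_rpow_of_exponent_le hr1 (hq_le k))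
        (Real.rpow_nonneg hK0.le _)
    rw [← h2]
    exact le_trans h1 (le_trans (claim k) h3)
  -- pass to the limit
  have hxk : Tendsto (fun k : ℕ => x ^ k) atTop (nhds 0) :=
    tendsto_pow_atTop_nhds_zero_of_lt_one hx0.le hx1
  have hβlim : Tendsto (fun k : ℕ => ENNReal.ofReal (β ^ (x ^ k))) atTop (nhds 1) := by
    have hreal : Tendsto (fun k : ℕ => β ^ ((x:ℝ) ^ k)) atTop (nhds 1) := by
      simp only [Real.rpow_def_of_pos hβ0]
      have := (Real.continuous_exp.tendsto (Real.log β * 0)).comp (hxk.const_mul (Real.log β))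
      simpa [Function.comp_def] using this
    have := (ENNReal.continuous_ofReal.tendsto 1).comp hreal
    simpa [Function.comp_def] using this
  have hF : Tendsto (fun k : ℕ => a * ENNReal.ofReal (β ^ (x ^ k))) atTop (nhds a) := by
    have := ENNReal.Tendsto.const_mul (a := a) hβlim (Or.inl one_ne_zero)
    simpa using this
  have hG : Tendsto (fun k : ℕ => ENNReal.ofReal (K ^ (p k) * r ^ S) * I 0) atTop
      (nhds (ENNReal.ofReal (K ^ (ν/2) * r ^ S) * I 0)) := by
    refine ENNReal.Tendsto.mul_const ?_ (Or.inl ?_)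
    · exact (ENNReal.continuous_ofReal.tendsto _).comp (hKlim.mul_const _)
    · exact (ENNReal.ofReal_pos.mpr (mul_pos (Real.rpow_pos_of_pos hK0 _)
        (Real.rpow_pos_of_pos hr0 _))).ne'
  exact le_of_tendsto_of_tendsto' hF hG hchain
end

section
/- Let (X, m) be a measure space, δ ∈ (0, 1), ν > 0, E > 0 and p ∈ (0, 2). Let {B_σ}_{σ ∈ [δ,1]} be measurable subsets of X with B_{σ'} ⊆ B_σ whenever σ' ≤ σ, and let u : X → [0, ∞) be measurable with ess sup_{B_1} u < ∞. Suppose that for all δ ≤ σ' < σ ≤ 1, ess sup_{B_{σ'}} u² ≤ E (σ − σ')^{−ν} ∫_{B_σ} u² dm. Then ess sup_{B_δ} u^{p} ≤ 2^{2ν/p} · E · (1 − δ)^{−ν} · ∫_{B_1} u^{p} dm. -/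
open MeasureTheory Set ENNReal Filter

/-- Self-improvement of the `L²` mean value inequality to all exponents `p ∈ (0,2)`
(second half of the proof of Theorem 4.3 of the paper): if a nonnegative measurable
function `u`, essentially bounded on `B_1`, satisfies
`ess sup_{B_{σ'}} u² ≤ E (σ-σ')^{-ν} ∫_{B_σ} u²` for all `δ ≤ σ' < σ ≤ 1` over the nested
sets `B_σ`, then `ess sup_{B_δ} u^p ≤ 2^{2ν/p} E (1-δ)^{-ν} ∫_{B_1} u^p`. -/
theorem mean_value_self_improvement {X : Type*} [MeasurableSpace X] (m : Measure X)
    (δ ν E p : ℝ) (hδ0 : 0 < δ) (hδ1 : δ < 1) (hν : 0 < ν) (hE : 0 < E)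
    (hp0 : 0 < p) (hp2 : p < 2)
    (B : ℝ → Set X) (hBmeas : ∀ σ ∈ Set.Icc δ (1 : ℝ), MeasurableSet (B σ))
    (hBmono : ∀ σ' σ : ℝ, δ ≤ σ' → σ' ≤ σ → σ ≤ 1 → B σ' ⊆ B σ)
    (u : X → ℝ≥0∞) (hu : Measurable u)
    (hbdd : essSup u (m.restrict (B 1)) < ⊤)
    (h : ∀ σ' σ : ℝ, δ ≤ σ' → σ' < σ → σ ≤ 1 →
      essSup (fun x => u x ^ (2 : ℝ)) (m.restrict (B σ')) ≤
        ENNReal.ofReal (E * (σ - σ') ^ (-ν)) * ∫⁻ x in B σ, u x ^ (2 : ℝ) ∂m) :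
    essSup (fun x => u x ^ p) (m.restrict (B δ)) ≤
      ENNReal.ofReal ((2 : ℝ) ^ (2 * ν / p) * E * (1 - δ) ^ (-ν)) *
        ∫⁻ x in B 1, u x ^ p ∂m := by
  have h1δ : (0:ℝ) < 1 - δ := by linarith
  set lam : ℝ := (2 - p) / 2 with hlam_def
  have hlam0 : 0 < lam := by rw [hlam_def]; linarith
  have hlam1 : lam < 1 := by rw [hlam_def]; linarith
  set f : ℝ → ℝ≥0∞ := fun σ => essSup (fun x => u x ^ (2 : ℝ)) (m.restrict (B σ)) with hf_def
  set I : ℝ≥0∞ := ∫⁻ x in B 1, u x ^ p ∂m with hI_def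
  -- coefficient positivity
  have hcoef : 0 < (2 : ℝ) ^ (2 * ν / p) * E * (1 - δ) ^ (-ν) :=
    mul_pos (mul_pos (Real.rpow_pos_of_pos (by norm_num) _) hE)
      (Real.rpow_pos_of_pos h1δ _)
  -- monotonicity of f
  have hfmono : ∀ σ' σ : ℝ, δ ≤ σ' → σ' ≤ σ → σ ≤ 1 → f σ' ≤ f σ := by
    intro σ' σ h1 h2 h3
    exact essSup_mono_measure (Measure.absolutelyContinuous_of_le
      (Measure.restrict_mono (hBmono σ' σ h1 h2 h3) le_rfl))
  have hf1_top : f 1 < ⊤ := by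
    have hle : f 1 ≤ (essSup u (m.restrict (B 1))) ^ (2:ℝ) := by
      refine essSup_le_of_ae_le _ ?_
      filter_upwards [ae_le_essSup (μ := m.restrict (B 1)) u] with x hx
      exact ENNReal.rpow_le_rpow hx (by norm_num)
    exact hle.trans_lt (ENNReal.rpow_lt_top_of_nonneg (by norm_num) hbdd.ne)
  have hftop : ∀ σ : ℝ, δ ≤ σ → σ ≤ 1 → f σ ≠ ⊤ := fun σ h1 h2 =>
    ((hfmono σ 1 h1 h2 le_rfl).trans_lt hf1_top).ne
  -- reduction of LHS to (f δ) ^ (p/2)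
  have hLHS : essSup (fun x => u x ^ p) (m.restrict (B δ)) ≤ (f δ) ^ (p / 2) := by
    refine essSup_le_of_ae_le _ ?_
    filter_upwards [ae_le_essSup (μ := m.restrict (B δ)) (fun x => u x ^ (2:ℝ))] with x hx
    have h1 : u x ^ p = (u x ^ (2:ℝ)) ^ (p/2) := by
      rw [← ENNReal.rpow_mul, show (2:ℝ) * (p/2) = p by ring]
    rw [h1]
    exact ENNReal.rpow_le_rpow hx (by positivity)
  -- interpolation + hypothesis: the iteration step, in ℝ≥0∞
  have hstep : ∀ σ' σ : ℝ, δ ≤ σ' → σ' < σ → σ ≤ 1 →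
      f σ' ≤ ENNReal.ofReal (E * (σ - σ') ^ (-ν)) * ((f σ) ^ lam * I) := by
    intro σ' σ h1 h2 h3
    have hδσ : δ ≤ σ := h1.trans h2.le
    refine (h σ' σ h1 h2 h3).trans (mul_le_mul_right ?_ _)
    calc ∫⁻ x in B σ, u x ^ (2:ℝ) ∂m
        ≤ ∫⁻ x in B σ, (f σ) ^ lam * u x ^ p ∂m := by
          refine lintegral_mono_ae ?_
          filter_upwards [ae_le_essSup (μ := m.restrict (B σ)) (fun x => u x ^ (2:ℝ))]
            with x hx
          have h2eq : u x ^ (2:ℝ) = u x ^ ((2:ℝ) - p) * u x ^ p := by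
            rw [← ENNReal.rpow_add_of_nonneg _ _ (by linarith) hp0.le]
            norm_num
          rw [h2eq]
          refine mul_le_mul_left ?_ _
          have hre : u x ^ ((2:ℝ) - p) = (u x ^ (2:ℝ)) ^ lam := by
            rw [← ENNReal.rpow_mul, show (2:ℝ) * lam = 2 - p by rw [hlam_def]; ring]
          rw [hre]
          exact ENNReal.rpow_le_rpow hx hlam0.le
      _ = (f σ) ^ lam * ∫⁻ x in B σ, u x ^ p ∂m :=
          lintegral_const_mul _ (hu.pow_const p)
      _ ≤ (f σ) ^ lam * I :=
          mul_le_mul_right (lintegral_mono_set (hBmono σ 1 hδσ h3 le_rfl)) _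
  -- trivial cases
  by_cases hItop : I = ⊤
  · rw [hItop, ENNReal.mul_top (by simp [ENNReal.ofReal_eq_zero]; linarith)]
    exact le_top
  by_cases hfδ0 : f δ = 0
  · refine hLHS.trans ?_
    rw [hfδ0, ENNReal.zero_rpow_of_pos (by positivity)]
    exact zero_le
  by_cases hI0 : I = 0
  · exfalso
    have h0 := hstep δ 1 le_rfl hδ1 le_rfl
    rw [hI0, mul_zero, mul_zero] at h0
    exact hfδ0 (le_zero_iff.mp h0)
  -- main case: everything positive and finite; pass to real numbers
  have hf1_0 : f 1 ≠ 0 := by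
    intro h0
    exact hfδ0 (le_zero_iff.mp (h0 ▸ hfmono δ 1 le_rfl hδ1.le le_rfl))
  set Ir : ℝ := I.toReal with hIr_def
  have hIr0 : 0 < Ir := ENNReal.toReal_pos hI0 hItop
  set F : ℝ → ℝ := fun σ => (f σ).toReal with hF_def
  have hF0 : ∀ σ, 0 ≤ F σ := fun σ => ENNReal.toReal_nonneg
  have hF1pos : 0 < F 1 := ENNReal.toReal_pos hf1_0 hf1_top.ne
  have hFmono : ∀ σ' σ, δ ≤ σ' → σ' ≤ σ → σ ≤ 1 → F σ' ≤ F σ := fun σ' σ h1 h2 h3 =>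
    ENNReal.toReal_mono (hftop σ (h1.trans h2) h3) (hfmono σ' σ h1 h2 h3)
  have hFstep : ∀ σ' σ, δ ≤ σ' → σ' < σ → σ ≤ 1 →
      F σ' ≤ E * (σ - σ') ^ (-ν) * ((F σ) ^ lam * Ir) := by
    intro σ' σ h1 h2 h3
    have hδσ : δ ≤ σ := h1.trans h2.le
    have hne : ENNReal.ofReal (E * (σ - σ') ^ (-ν)) * ((f σ) ^ lam * I) ≠ ⊤ :=
      ENNReal.mul_ne_top ENNReal.ofReal_ne_top
        (ENNReal.mul_ne_top
          (ENNReal.rpow_lt_top_of_nonneg hlam0.le (hftop σ hδσ h3)).ne hItop)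
    have hto := ENNReal.toReal_mono hne (hstep σ' σ h1 h2 h3)
    rw [ENNReal.toReal_mul, ENNReal.toReal_mul,
      ENNReal.toReal_ofReal (mul_nonneg hE.le (Real.rpow_nonneg (by linarith) _)),
      ← ENNReal.toReal_rpow] at hto
    exact hto
  -- the geometric sequence of radii
  set σs : ℕ → ℝ := fun n => 1 - (1 - δ) / 2 ^ n with hσs_def
  have hσs0 : σs 0 = δ := by simp [hσs_def]
  have hσsle1 : ∀ n, σs n ≤ 1 := by
    intro n
    have hx : 0 < (1 - δ) / 2 ^ n := by positivity
    rw [hσs_def]; dsimp only; linarith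
  have hσsδ : ∀ n, δ ≤ σs n := by
    intro n
    have h2n : (1:ℝ) ≤ 2 ^ n := one_le_pow₀ (by norm_num)
    have hx : (1 - δ) / 2 ^ n ≤ 1 - δ := div_le_self (by linarith) h2n
    rw [hσs_def]; dsimp only; linarith
  have hgapeq : ∀ n : ℕ, σs (n+1) - σs n = (1 - δ) / 2 ^ (n+1) := by
    intro n
    rw [hσs_def]; dsimp only
    rw [pow_succ]
    have h2n : (0:ℝ) < 2 ^ n := by positivity
    field_simp
    ring
  have hσslt : ∀ n, σs n < σs (n+1) := by
    intro n
    rw [← sub_pos, hgapeq n]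
    positivity
  have hgap : ∀ n : ℕ, (σs (n+1) - σs n) ^ (-ν) = (1-δ)^(-ν) * (2:ℝ)^(ν * ((n:ℝ)+1)) := by
    intro n
    rw [hgapeq n]
    have h2p : (0:ℝ) < 2 ^ (n+1) := by positivity
    have e1 : ((2:ℝ) ^ (n+1)) ^ (-ν) = (2:ℝ) ^ (-(ν * ((n:ℝ)+1))) := by
      rw [← Real.rpow_natCast (2:ℝ) (n+1), ← Real.rpow_mul (by norm_num)]
      congr 1
      push_cast
      ring
    rw [Real.div_rpow (by linarith) h2p.le, e1,
      Real.rpow_neg (by norm_num : (0:ℝ) ≤ 2) (ν * ((n:ℝ)+1)), div_eq_mul_inv, inv_inv]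
  -- iteration
  set A : ℝ := E * (1-δ)^(-ν) * Ir with hA_def
  have hApos : 0 < A := by
    have hx : (0:ℝ) < (1-δ)^(-ν) := Real.rpow_pos_of_pos h1δ _
    positivity
  have hiter : ∀ n : ℕ, F δ ≤
      A ^ (∑ k ∈ Finset.range n, lam ^ k) *
      (2:ℝ) ^ (ν * ∑ k ∈ Finset.range n, ((k:ℝ)+1) * lam ^ k) *
      (F (σs n)) ^ (lam ^ n) := by
    intro n
    induction n with
    | zero => simp [hσs0]
    | succ n ih =>
      have hx : (0:ℝ) ≤ F (σs (n+1)) := hF0 _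
      have hFstepn : F (σs n) ≤ A * (2:ℝ)^(ν*((n:ℝ)+1)) * (F (σs (n+1)))^lam := by
        have hst := hFstep (σs n) (σs (n+1)) (hσsδ n) (hσslt n) (hσsle1 (n+1))
        rw [hgap n] at hst
        calc F (σs n) ≤ E * ((1-δ)^(-ν) * (2:ℝ)^(ν*((n:ℝ)+1))) * ((F (σs (n+1)))^lam * Ir) := hst
          _ = A * (2:ℝ)^(ν*((n:ℝ)+1)) * (F (σs (n+1)))^lam := by rw [hA_def]; ring
      have e1 : (A * (2:ℝ)^(ν*((n:ℝ)+1)) * (F (σs (n+1)))^lam) ^ (lam ^ n)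
          = A ^ (lam ^ n) * (2:ℝ) ^ (ν*((n:ℝ)+1) * lam ^ n) *
            (F (σs (n+1))) ^ (lam ^ (n+1)) := by
        rw [Real.mul_rpow (by positivity) (Real.rpow_nonneg hx _),
          Real.mul_rpow hApos.le (by positivity),
          ← Real.rpow_mul (by norm_num : (0:ℝ) ≤ 2),
          ← Real.rpow_mul hx, show lam * lam ^ n = lam ^ (n+1) by ring]
      calc F δ ≤ A ^ (∑ k ∈ Finset.range n, lam ^ k) *
            (2:ℝ) ^ (ν * ∑ k ∈ Finset.range n, ((k:ℝ)+1) * lam ^ k) *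
            (F (σs n)) ^ (lam ^ n) := ih
        _ ≤ A ^ (∑ k ∈ Finset.range n, lam ^ k) *
            (2:ℝ) ^ (ν * ∑ k ∈ Finset.range n, ((k:ℝ)+1) * lam ^ k) *
            (A * (2:ℝ)^(ν*((n:ℝ)+1)) * (F (σs (n+1)))^lam) ^ (lam ^ n) := by
            refine mul_le_mul_of_nonneg_left ?_ (by positivity)
            exact Real.rpow_le_rpow (hF0 _) hFstepn (by positivity)
        _ = A ^ (∑ k ∈ Finset.range (n+1), lam ^ k) *
            (2:ℝ) ^ (ν * ∑ k ∈ Finset.range (n+1), ((k:ℝ)+1) * lam ^ k) *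
            (F (σs (n+1))) ^ (lam ^ (n+1)) := by
            have e2 : (2:ℝ) ^ (ν * (∑ k ∈ Finset.range n, ((k:ℝ)+1) * lam ^ k +
                ((n:ℝ)+1) * lam ^ n)) =
                (2:ℝ) ^ (ν * ∑ k ∈ Finset.range n, ((k:ℝ)+1) * lam ^ k) *
                (2:ℝ) ^ (ν * ((n:ℝ)+1) * lam ^ n) := by
              rw [← Real.rpow_add (by norm_num : (0:ℝ) < 2)]
              congr 1
              ring
            rw [e1, Finset.sum_range_succ, Finset.sum_range_succ,
              Real.rpow_add hApos, e2]
            ring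
  have hiter1 : ∀ n : ℕ, F δ ≤
      A ^ (∑ k ∈ Finset.range n, lam ^ k) *
      (2:ℝ) ^ (ν * ∑ k ∈ Finset.range n, ((k:ℝ)+1) * lam ^ k) *
      (F 1) ^ (lam ^ n) := by
    intro n
    refine (hiter n).trans (mul_le_mul_of_nonneg_left ?_ (by positivity))
    exact Real.rpow_le_rpow (hF0 _) (hFmono (σs n) 1 (hσsδ n) (hσsle1 n) le_rfl)
      (by positivity)
  -- limits
  have hs_lim : Tendsto (fun n => ∑ k ∈ Finset.range n, lam ^ k) atTop (nhds (1-lam)⁻¹) :=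
    (hasSum_geometric_of_lt_one hlam0.le hlam1).tendsto_sum_nat
  have ht_lim : Tendsto (fun n => ∑ k ∈ Finset.range n, ((k:ℝ)+1) * lam ^ k) atTop
      (nhds (lam / (1-lam)^2 + (1-lam)⁻¹)) := by
    have h1 : HasSum (fun k : ℕ => (k:ℝ) * lam ^ k) (lam/(1-lam)^2) :=
      hasSum_coe_mul_geometric_of_norm_lt_one
        (by rw [Real.norm_eq_abs, abs_of_pos hlam0]; exact hlam1)
    have h2 := h1.add (hasSum_geometric_of_lt_one hlam0.le hlam1)
    have h3 : HasSum (fun k : ℕ => ((k:ℝ)+1) * lam ^ k) (lam/(1-lam)^2 + (1-lam)⁻¹) := by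
      have he : (fun k : ℕ => ((k:ℝ)+1) * lam ^ k)
          = fun k : ℕ => (k:ℝ) * lam ^ k + lam ^ k := by
        funext k; ring
      rw [he]; exact h2
    exact h3.tendsto_sum_nat
  set Tν : ℝ := ν * (lam / (1-lam)^2 + (1-lam)⁻¹) with hTν_def
  have hG : Tendsto (fun n => A ^ (∑ k ∈ Finset.range n, lam ^ k) *
      (2:ℝ) ^ (ν * ∑ k ∈ Finset.range n, ((k:ℝ)+1) * lam ^ k) *
      (F 1) ^ (lam ^ n)) atTop
      (nhds (A ^ ((1-lam)⁻¹) * (2:ℝ) ^ Tν * 1)) := by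
    refine Tendsto.mul (Tendsto.mul ?_ ?_) ?_
    · exact tendsto_const_nhds.rpow hs_lim (Or.inl hApos.ne')
    · exact tendsto_const_nhds.rpow (ht_lim.const_mul ν) (Or.inl (by norm_num))
    · have hend := tendsto_const_nhds.rpow
        (tendsto_pow_atTop_nhds_zero_of_lt_one hlam0.le hlam1) (Or.inl hF1pos.ne')
      simpa using hend
  have hFδle : F δ ≤ A ^ ((1-lam)⁻¹) * (2:ℝ) ^ Tν := by
    have hge := ge_of_tendsto hG (Filter.Eventually.of_forall hiter1)
    simpa using hge
  -- final exponent arithmetic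
  have h1lam : 1 - lam = p/2 := by rw [hlam_def]; ring
  have hSexp : (1-lam)⁻¹ * (p/2) = 1 := by
    rw [h1lam]; field_simp
  have hTexp : Tν * (p/2) = 2*ν/p := by
    rw [hTν_def, h1lam, hlam_def]
    field_simp
    ring
  have hkey : (F δ) ^ (p/2) ≤ (2:ℝ)^(2*ν/p) * E * (1-δ)^(-ν) * Ir := by
    calc (F δ) ^ (p/2) ≤ (A ^ ((1-lam)⁻¹) * (2:ℝ) ^ Tν) ^ (p/2) :=
          Real.rpow_le_rpow (hF0 δ) hFδle (by positivity)
      _ = A ^ ((1-lam)⁻¹ * (p/2)) * (2:ℝ) ^ (Tν * (p/2)) := by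
          rw [Real.mul_rpow (Real.rpow_nonneg hApos.le _) (Real.rpow_nonneg (by norm_num) _),
            ← Real.rpow_mul hApos.le, ← Real.rpow_mul (by norm_num : (0:ℝ) ≤ 2)]
      _ = (2:ℝ)^(2*ν/p) * E * (1-δ)^(-ν) * Ir := by
          rw [hSexp, hTexp, Real.rpow_one, hA_def]; ring
  refine hLHS.trans ?_
  have hfδeq : f δ = ENNReal.ofReal (F δ) :=
    (ENNReal.ofReal_toReal (hftop δ le_rfl hδ1.le)).symm
  rw [hfδeq, ENNReal.ofReal_rpow_of_nonneg (hF0 δ) (by positivity)]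
  calc ENNReal.ofReal ((F δ) ^ (p/2))
      ≤ ENNReal.ofReal ((2:ℝ)^(2*ν/p) * E * (1-δ)^(-ν) * Ir) :=
        ENNReal.ofReal_le_ofReal hkey
    _ = ENNReal.ofReal ((2:ℝ)^(2*ν/p) * E * (1-δ)^(-ν)) * ENNReal.ofReal Ir :=
        ENNReal.ofReal_mul hcoef.le
    _ = ENNReal.ofReal ((2:ℝ)^(2*ν/p) * E * (1-δ)^(-ν)) * I := by
        rw [hIr_def, ENNReal.ofReal_toReal hItop]
end
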